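/- The function v(x) = sgn(x)·√(x - ln(1+x)) is a strictly increasing continuous bijection from (-1, ∞) onto ℝ. -/

import Mathlib

open Real Set

private lemma g_hasDeriv (x : ℝ) (hx : -1 < x) :
    HasDerivAt (fun y : ℝ => y - Real.log (1+y)) (1 - (1+x)⁻¹) x := by
  have h1 : HasDerivAt (fun y : ℝ => 1+y) 1 x := by simpa using (hasDerivAt_id x).const_add 1
  have h2 : HasDerivAt (fun y : ℝ => Real.log (1+y)) ((1+x)⁻¹ * 1) x :=
    (Real.hasDerivAt_log (by linarith)).comp x h1
  have h3 := (hasDerivAt_id' x).sub h2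
  rw [mul_one] at h3
  exact h3

private lemma g_pos (x : ℝ) (hx : -1 < x) (hx0 : x ≠ 0) : 0 < x - Real.log (1+x) := by
  have h1 : (0:ℝ) < 1 + x := by linarith
  have h2 := Real.add_one_lt_exp hx0
  have h3 : Real.log (1+x) < x := (Real.log_lt_iff_lt_exp h1).mpr (by linarith)
  linarith

private lemma g_nonneg (x : ℝ) (hx : -1 < x) : 0 ≤ x - Real.log (1+x) := by
  have h1 : (0:ℝ) < 1 + x := by linarith
  have := Real.log_le_sub_one_of_pos h1
  linarith

private lemma g_cont : ContinuousOn (fun y : ℝ => y - Real.log (1+y)) (Set.Ioi (-1:ℝ)) := by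
  apply continuousOn_id.sub
  apply ContinuousOn.log ((continuous_const.add continuous_id).continuousOn)
  intro x hx
  have : -1 < x := hx
  intro h; simp at h; linarith

private lemma g_mono : StrictMonoOn (fun y : ℝ => y - Real.log (1+y)) (Set.Ici (0:ℝ)) := by
  apply strictMonoOn_of_deriv_pos (convex_Ici 0)
    (g_cont.mono (fun x hx => by simp only [mem_Ici] at hx; exact mem_Ioi.mpr (by linarith)))
  intro x hx
  rw [interior_Ici, mem_Ioi] at hx
  rw [(g_hasDeriv x (by linarith)).deriv]
  have h1 : (0:ℝ) < 1 + x := by linarith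
  have : 1 - (1+x)⁻¹ = x / (1+x) := by field_simp; ring
  rw [this]
  positivity

private lemma g_anti : StrictAntiOn (fun y : ℝ => y - Real.log (1+y)) (Set.Ioc (-1:ℝ) 0) := by
  apply strictAntiOn_of_deriv_neg (convex_Ioc (-1) 0)
    (g_cont.mono (fun x hx => hx.1))
  intro x hx
  rw [interior_Ioc, mem_Ioo] at hx
  rw [(g_hasDeriv x hx.1).deriv]
  have h1 : (0:ℝ) < 1 + x := by linarith [hx.1]
  have h2 : 1 - (1+x)⁻¹ = x / (1+x) := by field_simp; ring
  rw [h2]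
  exact div_neg_of_neg_of_pos hx.2 h1

private lemma v_mono : StrictMonoOn
    (fun x : ℝ => Real.sign x * Real.sqrt (x - Real.log (1 + x))) (Set.Ioi (-1:ℝ)) := by
  intro x hx y hy hxy
  simp only [mem_Ioi] at hx hy
  dsimp only
  have wy_pos : ∀ z : ℝ, -1 < z → z ≠ 0 → 0 < Real.sqrt (z - Real.log (1+z)) :=
    fun z hz hz0 => Real.sqrt_pos.mpr (g_pos z hz hz0)
  rcases lt_trichotomy y 0 with hy0 | hy0 | hy0
  · -- x < y < 0
    have hx0 : x < 0 := lt_trans hxy hy0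
    rw [Real.sign_of_neg hx0, Real.sign_of_neg hy0]
    have := g_anti ⟨hx, le_of_lt hx0⟩ ⟨hy, le_of_lt hy0⟩ hxy
    have hs := Real.sqrt_lt_sqrt (g_nonneg y hy) this
    nlinarith
  · -- y = 0
    subst hy0
    have hx0 : x < 0 := hxy
    rw [Real.sign_of_neg hx0, Real.sign_zero]
    have := wy_pos x hx (ne_of_lt hx0)
    nlinarith
  · -- y > 0
    rw [Real.sign_of_pos hy0]
    have hwy := wy_pos y hy (ne_of_gt hy0)
    rcases lt_trichotomy x 0 with hx0 | hx0 | hx0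
    · rw [Real.sign_of_neg hx0]
      have := Real.sqrt_nonneg (x - Real.log (1+x))
      nlinarith
    · subst hx0; rw [Real.sign_zero]; simpa using hwy
    · rw [Real.sign_of_pos hx0]
      have := g_mono (le_of_lt hx0 : (0:ℝ) ≤ x) (by linarith : (0:ℝ) ≤ y) hxy
      have hs := Real.sqrt_lt_sqrt (g_nonneg x hx) this
      nlinarith

private lemma v_cont : ContinuousOn
    (fun x : ℝ => Real.sign x * Real.sqrt (x - Real.log (1 + x))) (Set.Ioi (-1:ℝ)) := by
  have wcont : ∀ x : ℝ, -1 < x →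
      ContinuousAt (fun y : ℝ => Real.sqrt (y - Real.log (1+y))) x := by
    intro x hx
    have hg : ContinuousAt (fun y : ℝ => y - Real.log (1+y)) x := by
      have hl := (Real.continuousAt_log (x := 1+x) (by intro h; linarith)).comp
        ((continuous_const.add continuous_id).continuousAt (x := x))
      exact continuousAt_id.sub hl
    exact Real.continuous_sqrt.continuousAt.comp hg
  intro x hx
  have hx' : -1 < x := hx
  rcases lt_trichotomy x 0 with hx0 | hx0 | hx0
  · -- locally v = -w
    have heq : (fun y : ℝ => -Real.sqrt (y - Real.log (1+y))) =ᶠ[nhds x]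
        (fun y : ℝ => Real.sign y * Real.sqrt (y - Real.log (1+y))) := by
      filter_upwards [Iio_mem_nhds hx0] with y hy
      rw [Real.sign_of_neg hy]; ring
    exact (((wcont x hx').neg).congr heq).continuousWithinAt
  · -- squeeze at 0
    subst hx0
    have hw0 : Real.sqrt ((0:ℝ) - Real.log (1+0)) = 0 := by norm_num
    have htw : Filter.Tendsto (fun y : ℝ => Real.sqrt (y - Real.log (1+y)))
        (nhdsWithin 0 (Set.Ioi (-1:ℝ))) (nhds 0) := by
      have := ((wcont 0 (by norm_num)).continuousWithinAt
        (s := Set.Ioi (-1:ℝ)))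
      rw [ContinuousWithinAt, hw0] at this
      exact this
    have hbound : ∀ y : ℝ, ‖Real.sign y * Real.sqrt (y - Real.log (1+y))‖ ≤
        Real.sqrt (y - Real.log (1+y)) := by
      intro y
      have hs : |Real.sign y| ≤ 1 := by
        rcases lt_trichotomy y 0 with h | h | h
        · rw [Real.sign_of_neg h]; norm_num
        · subst h; rw [Real.sign_zero]; norm_num
        · rw [Real.sign_of_pos h]; norm_num
      have hq := Real.sqrt_nonneg (y - Real.log (1+y))
      rw [Real.norm_eq_abs, abs_mul, abs_of_nonneg hq]
      nlinarith [abs_nonneg (Real.sign y)]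
    have key : Filter.Tendsto (fun y : ℝ => Real.sign y * Real.sqrt (y - Real.log (1+y)))
        (nhdsWithin 0 (Set.Ioi (-1:ℝ))) (nhds 0) := squeeze_zero_norm hbound htw
    show ContinuousWithinAt _ _ _
    rw [ContinuousWithinAt]
    simpa using key
  · have heq : (fun y : ℝ => Real.sqrt (y - Real.log (1+y))) =ᶠ[nhds x]
        (fun y : ℝ => Real.sign y * Real.sqrt (y - Real.log (1+y))) := by
      filter_upwards [Ioi_mem_nhds hx0] with y hy
      rw [Real.sign_of_pos hy]; ring
    exact ((wcont x hx').congr heq).continuousWithinAt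

private lemma v_surj (c : ℝ) :
    ∃ x ∈ Set.Ioi (-1:ℝ), Real.sign x * Real.sqrt (x - Real.log (1+x)) = c := by
  rcases lt_trichotomy c 0 with hc | hc | hc
  · -- c < 0
    set a : ℝ := Real.exp (-(c^2+1)) - 1 with ha_def
    have h1a : (0:ℝ) < 1 + a := by
      rw [ha_def]; have := Real.exp_pos (-(c^2+1)); linarith
    have ha1 : -1 < a := by linarith
    have ha0 : a ≤ 0 := by
      have : Real.exp (-(c^2+1)) ≤ 1 := Real.exp_le_one_iff.mpr (by nlinarith [sq_nonneg c])
      rw [ha_def]; linarith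
    have hga : a - Real.log (1+a) = a + (c^2+1) := by
      have : (1:ℝ) + a = Real.exp (-(c^2+1)) := by simp [ha_def]
      rw [this, Real.log_exp]; ring
    have hsub : Set.Icc a 0 ⊆ Set.Ioi (-1:ℝ) := fun z hz => lt_of_lt_of_le ha1 hz.1
    have hIVT := intermediate_value_Icc' ha0 (g_cont.mono hsub)
    have hmem : c^2 ∈ Set.Icc ((fun y : ℝ => y - Real.log (1+y)) 0)
        ((fun y : ℝ => y - Real.log (1+y)) a) := by
      constructor
      · simp; positivity
      · simp only [hga]; nlinarith
    obtain ⟨x, hx, hgx⟩ := hIVT hmem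
    have hx1 : -1 < x := lt_of_lt_of_le ha1 hx.1
    have hxne : x ≠ 0 := by
      intro h; rw [h] at hgx; simp at hgx; nlinarith
    have hxneg : x < 0 := lt_of_le_of_ne hx.2 hxne
    refine ⟨x, hx1, ?_⟩
    simp only at hgx
    rw [Real.sign_of_neg hxneg, hgx, Real.sqrt_sq_eq_abs, abs_of_neg hc]; ring
  · exact ⟨0, by norm_num, by rw [hc]; simp⟩
  · -- c > 0
    set M : ℝ := 2*c^2 + 2*Real.log 2 with hM_def
    have hlog2 : (0:ℝ) < Real.log 2 := Real.log_pos (by norm_num)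
    have hM0 : (0:ℝ) ≤ M := by nlinarith
    have h2 : (0:ℝ) < (1+M)/2 := by linarith
    have hle := Real.log_le_sub_one_of_pos h2
    have hmul : Real.log (1+M) = Real.log 2 + Real.log ((1+M)/2) := by
      rw [← Real.log_mul (by norm_num) (ne_of_gt h2)]; ring_nf
    have hgM : c^2 ≤ M - Real.log (1+M) := by
      rw [hmul]; linarith
    have hsub : Set.Icc (0:ℝ) M ⊆ Set.Ioi (-1:ℝ) := fun z hz => lt_of_lt_of_le (by norm_num) hz.1
    have hIVT := intermediate_value_Icc hM0 (g_cont.mono hsub)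
    have hmem : c^2 ∈ Set.Icc ((fun y : ℝ => y - Real.log (1+y)) 0)
        ((fun y : ℝ => y - Real.log (1+y)) M) := by
      constructor
      · simp; positivity
      · simpa using hgM
    obtain ⟨x, hx, hgx⟩ := hIVT hmem
    have hxne : x ≠ 0 := by
      intro h; rw [h] at hgx; simp at hgx; nlinarith
    have hxpos : 0 < x := lt_of_le_of_ne hx.1 (Ne.symm hxne)
    refine ⟨x, lt_of_lt_of_le (by norm_num) hx.1, ?_⟩
    simp only at hgx
    rw [Real.sign_of_pos hxpos, hgx, Real.sqrt_sq_eq_abs, abs_of_pos hc]; ring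

theorem stmt_3 :
    StrictMonoOn (fun x : ℝ => Real.sign x * Real.sqrt (x - Real.log (1 + x))) (Set.Ioi (-1)) ∧
    ContinuousOn (fun x : ℝ => Real.sign x * Real.sqrt (x - Real.log (1 + x))) (Set.Ioi (-1)) ∧
    Set.BijOn (fun x : ℝ => Real.sign x * Real.sqrt (x - Real.log (1 + x)))
      (Set.Ioi (-1)) Set.univ := by
  refine ⟨v_mono, v_cont, fun x _ => Set.mem_univ _, v_mono.injOn, fun c _ => ?_⟩
  obtain ⟨x, hx, hvx⟩ := v_surj c
  exact ⟨x, hx, hvx⟩
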